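/- arXiv:2210.01567 — 3 statements merged into one kernel-verified Lean document; each statement's English description precedes it below -/
import Mathlib

section
/- In a valued field K with valuation ring O, residue map res : O → k, and angular component map ac : Kˣ → kˣ (a group homomorphism agreeing with res on units of O): if A ≤ B are subfields of K such that ac(Aˣ) ⊆ res(O ∩ A) and val(Aˣ) = val(Bˣ), then ac(Bˣ) ⊆ res(O ∩ B). -/
/-- Let `K` be a valued field with valuation ring `O = v.integer`, residue map
`res : O → kres` and angular component map `ac : Kˣ → kresˣ` (a group
homomorphism agreeing with `res` on the units of `O`, i.e. on elements of
valuation `1`).  If `A ≤ B` are subfields of `K` with `ac(Aˣ) ⊆ res(O ∩ A)`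
and `val(Aˣ) = val(Bˣ)`, then `ac(Bˣ) ⊆ res(O ∩ B)`. -/
theorem ac_eq_res_extend (K : Type*) [Field K]
    (Γ₀ : Type*) [LinearOrderedCommGroupWithZero Γ₀]
    (v : Valuation K Γ₀)
    (kres : Type*) [Field kres]
    (res : v.integer →+* kres) (ac : Kˣ →* kresˣ)
    (hac : ∀ (u : Kˣ) (hu : (u : K) ∈ v.integer),
      v (u : K) = 1 → ((ac u : kres) = res ⟨(u : K), hu⟩))
    (A B : Subfield K) (hAB : A ≤ B)
    (hresA : ∀ a : Kˣ, (a : K) ∈ A →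
      ∃ x : v.integer, (x : K) ∈ A ∧ res x = (ac a : kres))
    (hval : ∀ b : Kˣ, (b : K) ∈ B →
      ∃ a : Kˣ, (a : K) ∈ A ∧ v (a : K) = v (b : K)) :
    ∀ b : Kˣ, (b : K) ∈ B →
      ∃ x : v.integer, (x : K) ∈ B ∧ res x = (ac b : kres) := by
  intro b hb
  obtain ⟨a, haA, hva⟩ := hval b hb
  have ha0 : v (a : K) ≠ 0 := by
    simp [Valuation.ne_zero_iff]
  -- the unit u = b * a⁻¹ has valuation 1
  set u : Kˣ := b * a⁻¹ with hu_def
  have hvu : v (u : K) = 1 := by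
    have : v ((u : K)) = v (b : K) * (v (a : K))⁻¹ := by
      simp [hu_def, map_inv₀]
    rw [this, ← hva]
    exact mul_inv_cancel₀ ha0
  have huI : (u : K) ∈ v.integer := by
    simp [Valuation.mem_integer_iff, hvu]
  clear_value u
  obtain ⟨x, hxA, hxres⟩ := hresA a haA
  refine ⟨x * ⟨(u : K), huI⟩, ?_, ?_⟩
  · have huB : (u : K) ∈ B := by
      have : (u : K) = (b : K) * (a : K)⁻¹ := by simp [hu_def]
      rw [this]
      exact B.mul_mem hb (B.inv_mem (hAB haA))
    exact B.mul_mem (hAB hxA) huB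
  · have hab : a * u = b := by
      rw [hu_def, mul_comm b, mul_inv_cancel_left]
    calc res (x * ⟨(u : K), huI⟩) = res x * res ⟨(u : K), huI⟩ := map_mul _ _ _
      _ = (ac a : kres) * (ac u : kres) := by rw [hxres, hac u huI hvu]
      _ = (ac b : kres) := by rw [← hab, map_mul, Units.val_mul]
end

section
/- Let K be a Henselian valued field of residue characteristic zero with value group Γ and residue field k. Let a₁,…,aₙ, b₁,…,bₙ ∈ Kˣ be such that (val(a₁),…,val(aₙ)) is a ℚ-linearly independent family in ℚ ⊗ Γ and rv(aᵢ) = rv(bᵢ) for each i. Then for every polynomial P over the prime field ℚ whose nonzero coefficients have value 0, rv(P(a₁,…,aₙ)) = rv(P(b₁,…,bₙ)). -/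
open MvPolynomial

section Aux

variable {K : Type*} [Field K] {Γ₀ : Type*} [LinearOrderedCommGroupWithZero Γ₀]
  (v : Valuation K Γ₀)

lemma rv_mul_aux {x y x' y' : K} (hx : v x ≠ 0) (hx' : v x' ≠ 0)
    (h : v (x - y) < v x) (h' : v (x' - y') < v x') :
    v (x * x' - y * y') < v (x * x') := by
  have hy' : v y' = v x' := v.map_eq_of_sub_lt (by rwa [Valuation.map_sub_swap])
  have key : x * x' - y * y' = x * (x' - y') + (x - y) * y' := by ring
  rw [key, v.map_mul]
  refine v.map_add_lt ?_ ?_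
  · rw [v.map_mul]
    exact mul_lt_mul_of_pos_left h' (zero_lt_iff.2 hx)
  · rw [v.map_mul, hy', mul_comm (v (x - y)), mul_comm (v x)]
    exact mul_lt_mul_of_pos_left h (zero_lt_iff.2 hx')

lemma rv_pow_aux {x y : K} (hx : v x ≠ 0) (h : v (x - y) < v x) (k : ℕ) :
    v (x ^ k - y ^ k) < v (x ^ k) := by
  induction k with
  | zero => simpa using zero_lt_one
  | succ k ih =>
      rw [pow_succ, pow_succ]
      exact rv_mul_aux v (pow_ne_zero k hx ∘ (v.map_pow x k ▸ ·)) hx ih h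

lemma rv_prod_aux {ι : Type*} (s : Finset ι) (x y : ι → K)
    (hx : ∀ i ∈ s, v (x i) ≠ 0) (h : ∀ i ∈ s, v (x i - y i) < v (x i)) :
    v (∏ i ∈ s, x i - ∏ i ∈ s, y i) < v (∏ i ∈ s, x i) := by
  induction s using Finset.cons_induction with
  | empty => simpa using zero_lt_one
  | cons i s hi ih =>
      rw [Finset.prod_cons, Finset.prod_cons]
      refine rv_mul_aux v (hx i (Finset.mem_cons_self i s)) ?_
        (h i (Finset.mem_cons_self i s))
        (ih (fun j hj => hx j (Finset.mem_cons_of_mem hj))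
          (fun j hj => h j (Finset.mem_cons_of_mem hj)))
      rw [map_prod]
      exact Finset.prod_ne_zero_iff.2 fun j hj => hx j (Finset.mem_cons_of_mem hj)

end Aux

/-- Let `K` be a Henselian valued field of residue characteristic zero (the
valuation `v` is written multiplicatively, so additive value `0` corresponds to
`v x = 1`, and `rv(x) = rv(y)` means `x = y = 0` or `v (x - y) < v x`).
If `a₁,…,aₙ, b₁,…,bₙ ∈ Kˣ` are such that the values `v(aᵢ)` are ℚ-linearly
independent in the divisible hull of the value group (no nontrivial integer
power product is `1`) and `rv(aᵢ) = rv(bᵢ)`, then for every polynomial `P`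
over ℚ whose nonzero coefficients have value `0` we have
`rv(P(a)) = rv(P(b))`. -/
theorem rv_eval_eq_of_rv_eq (K : Type*) [Field K] [CharZero K]
    (Γ₀ : Type*) [LinearOrderedCommGroupWithZero Γ₀]
    (v : Valuation K Γ₀)
    [HenselianLocalRing v.valuationSubring]
    [CharZero (IsLocalRing.ResidueField v.valuationSubring)]
    (n : ℕ) (a b : Fin n → Kˣ)
    (hfree : ∀ c : Fin n → ℤ, (∏ i, v (a i : K) ^ c i) = 1 → ∀ i, c i = 0)
    (hrv : ∀ i, v ((a i : K) - (b i : K)) < v (a i : K))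
    (P : MvPolynomial (Fin n) ℚ)
    (hcoeff : ∀ m ∈ P.support, v (algebraMap ℚ K (P.coeff m)) = 1) :
    aeval (fun i => (a i : K)) P = aeval (fun i => (b i : K)) P ∨
      v (aeval (fun i => (a i : K)) P - aeval (fun i => (b i : K)) P) <
        v (aeval (fun i => (a i : K)) P) := by
  have hva : ∀ i, v (a i : K) ≠ 0 := fun i => by
    simp [v.zero_iff]
  -- value of a monomial
  set Va : (Fin n →₀ ℕ) → Γ₀ := fun m => ∏ i, v (a i : K) ^ m i with hVa
  have hVane : ∀ m, Va m ≠ 0 := fun m =>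
    Finset.prod_ne_zero_iff.2 fun i _ => pow_ne_zero _ (hva i)
  -- rewrite the evaluations as sums of monomials
  have heval : ∀ c : Fin n → Kˣ,
      aeval (fun i => (c i : K)) P
        = ∑ m ∈ P.support, algebraMap ℚ K (P.coeff m) * ∏ i, (c i : K) ^ m i := by
    intro c
    rw [aeval_def, eval₂_eq']
  -- the value of the monomial ∏ aᵢ^{mᵢ}
  have hvmon : ∀ m : Fin n →₀ ℕ, v (∏ i, (a i : K) ^ m i) = Va m := by
    intro m
    rw [map_prod]
    exact Finset.prod_congr rfl fun i _ => v.map_pow _ _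
  -- distinctness of monomial values
  have hdist : ∀ m m' : Fin n →₀ ℕ, Va m = Va m' → m = m' := by
    intro m m' h
    have key : (∏ i, v (a i : K) ^ ((m i : ℤ) - (m' i : ℤ))) = 1 := by
      have : ∀ i : Fin n,
          v (a i : K) ^ ((m i : ℤ) - (m' i : ℤ))
            = v (a i : K) ^ (m i) * (v (a i : K) ^ (m' i))⁻¹ := by
        intro i
        rw [zpow_sub₀ (hva i), zpow_natCast, zpow_natCast, div_eq_mul_inv]
      rw [Finset.prod_congr rfl fun i _ => this i, Finset.prod_mul_distrib,
        Finset.prod_inv_distrib]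
      rw [hVa] at h
      simp only at h
      rw [h]
      exact mul_inv_cancel₀ (hVane m')
    have := hfree _ key
    ext i
    have hi := this i
    omega
  -- rv of corresponding monomials agree
  have hmon : ∀ m : Fin n →₀ ℕ,
      v (∏ i, (a i : K) ^ m i - ∏ i, (b i : K) ^ m i) < Va m := by
    intro m
    rw [← hvmon m]
    exact rv_prod_aux v Finset.univ _ _
      (fun i _ => by rw [v.map_pow]; exact pow_ne_zero _ (hva i))
      (fun i _ => rv_pow_aux v (hva i) (hrv i) (m i))
  by_cases hP : P.support = ∅
  · left
    rw [heval a, heval b, hP]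
    simp
  · right
    obtain ⟨m₀, hm₀, hmax⟩ := P.support.exists_max_image Va (Finset.nonempty_of_ne_empty hP)
    -- value of P(a)
    have hvA : v (aeval (fun i => (a i : K)) P) = Va m₀ := by
      rw [heval a]
      have : v (algebraMap ℚ K (P.coeff m₀) * ∏ i, (a i : K) ^ m₀ i) = Va m₀ := by
        rw [v.map_mul, hcoeff m₀ hm₀, one_mul, hvmon]
      rw [← this]
      refine v.map_sum_eq_of_lt hm₀ ?_
      intro m hm
      simp only [Finset.mem_sdiff, Finset.mem_singleton] at hm
      rw [this, v.map_mul, hcoeff m hm.1, one_mul, hvmon]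
      exact lt_of_le_of_ne (hmax m hm.1) fun h => hm.2 (hdist m m₀ h)
    rw [hvA, heval a, heval b, ← Finset.sum_sub_distrib]
    refine v.map_sum_lt (hVane m₀) ?_
    intro m hm
    rw [← mul_sub, v.map_mul, hcoeff m hm, one_mul]
    exact lt_of_lt_of_le (hmon m) (hmax m hm)
end

section
/- Let M be a monster model, A a small set, Z, Z' A-definable sets, R ⊆ Z × Z' an A-definable relation, and m < ω such that for every x ∈ Z the fiber R_x = {y ∈ Z' : R(x,y)} has exactly m elements. If Y ⊆ Z' is a definable set that divides over A, then X = {x ∈ Z : ∃y ∈ Y, R(x,y)} divides over A. -/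
open Pointwise Classical

/-- Abstract dividing over a parameter set `A` in a monster model: `G` stands
for the automorphism group `Aut(M/A)` acting on the relevant sorts. -/
def DividesOver (G : Type*) [Group G] {β : Type*} [MulAction G β]
    (Y : Set β) : Prop :=
  ∃ (N : ℕ) (σ : ℕ → G), σ 0 = 1 ∧
    ∀ P : Finset ℕ, P.card = N → (⋂ n ∈ P, σ n • Y) = ∅

/-- Let `Z`, `Z'` be `A`-definable (hence `Aut(M/A)`-invariant) sets,
`R ⊆ Z × Z'` an `A`-definable relation all of whose fibers `R_x` (for `x ∈ Z`)
have exactly `m` elements.  If `Y ⊆ Z'` is a definable set dividing over `A`,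
then `X = {x ∈ Z | ∃ y ∈ Y, R(x,y)}` divides over `A`. -/
theorem divides_of_finite_fibers (G : Type*) [Group G]
    (α β : Type*) [MulAction G α] [MulAction G β]
    (Z : Set α) (Z' : Set β) (R : Set (α × β)) (m : ℕ)
    (hZ : ∀ g : G, g • Z = Z) (hZ' : ∀ g : G, g • Z' = Z')
    (hR : ∀ (g : G) (x : α) (y : β), (x, y) ∈ R ↔ (g • x, g • y) ∈ R)
    (hRsub : R ⊆ Z ×ˢ Z')
    (hfib : ∀ x ∈ Z, ∃ s : Finset β, s.card = m ∧ ∀ y : β, (x, y) ∈ R ↔ y ∈ s)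
    (Y : Set β) (hYZ' : Y ⊆ Z') (hdiv : DividesOver G Y) :
    DividesOver G {x ∈ Z | ∃ y ∈ Y, (x, y) ∈ R} := by
  obtain ⟨N, σ, hσ0, hint⟩ := hdiv
  refine ⟨m * N + 1, σ, hσ0, ?_⟩
  intro P hP
  rw [Set.eq_empty_iff_forall_notMem]
  intro x hx
  simp only [Set.mem_iInter] at hx
  -- P is nonempty
  have hPne : P.Nonempty := by
    rw [← Finset.card_pos, hP]; omega
  obtain ⟨n0, hn0⟩ := hPne
  -- each n ∈ P gives a witness y with (σ n)⁻¹ • x ∈ X via y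
  have hwit : ∀ n ∈ P, ∃ y, y ∈ Y ∧ ((σ n)⁻¹ • x, y) ∈ R := by
    intro n hn
    have := hx n hn
    rw [Set.mem_smul_set_iff_inv_smul_mem] at this
    exact this.2
  -- x ∈ Z
  have hxZ : x ∈ Z := by
    obtain ⟨y, _, hy⟩ := hwit n0 hn0
    have hmem : (σ n0)⁻¹ • x ∈ Z := (hRsub hy).1
    have := hZ (σ n0)
    rw [← this]
    exact ⟨(σ n0)⁻¹ • x, hmem, by simp⟩
  obtain ⟨s, hscard, hsmem⟩ := hfib x hxZ
  have hβ : Nonempty β := ⟨(hwit n0 hn0).choose⟩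
  -- choice function
  set yf : ℕ → β := fun n =>
    if h : ∃ y, y ∈ Y ∧ ((σ n)⁻¹ • x, y) ∈ R then h.choose else Classical.arbitrary β
    with hyf
  have hyfY : ∀ n ∈ P, yf n ∈ Y ∧ ((σ n)⁻¹ • x, yf n) ∈ R := by
    intro n hn
    have h := hwit n hn
    simp only [hyf, dif_pos h]
    exact h.choose_spec
  -- f n := σ n • yf n lands in s for n ∈ P
  have hmaps : ∀ n ∈ P, σ n • yf n ∈ s := by
    intro n hn
    have h := (hyfY n hn).2
    have := (hR (σ n) ((σ n)⁻¹ • x) (yf n)).mp h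
    simp only [smul_inv_smul] at this
    exact (hsmem _).mp this
  -- pigeonhole
  have hlt : s.card * N < P.card := by rw [hscard, hP]; omega
  obtain ⟨z, hzs, hzcard⟩ :=
    Finset.exists_lt_card_fiber_of_mul_lt_card_of_maps_to hmaps hlt
  obtain ⟨Q, hQsub, hQcard⟩ := Finset.exists_subset_card_eq (le_of_lt hzcard)
  have hQP : Q ⊆ P := hQsub.trans (Finset.filter_subset _ _)
  have := hint Q hQcard
  rw [Set.eq_empty_iff_forall_notMem] at this
  refine this z ?_
  simp only [Set.mem_iInter]
  intro n hn
  have hnf := hQsub hn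
  rw [Finset.mem_filter] at hnf
  rw [← hnf.2]
  exact Set.smul_mem_smul_set (hyfY n (hQP hn)).1
end
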